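/- arXiv:1606.00239 — 2 statements merged into one kernel-verified Lean document; each statement's English description precedes it below -/
import Mathlib

section
/- The matrix exponential restricts to a bijection from the open ball {θ ∈ su(2) : |θ| < π√2} onto SU(2) \ {-I}. -/
open Matrix

/-- The norm on `su(2)`: `|θ| = √(-Tr(θ²))`. -/
noncomputable def su2Norm (θ : Matrix (Fin 2) (Fin 2) ℂ) : ℝ :=
  Real.sqrt (-(θ * θ).trace.re)



open Matrix Complex NormedSpace

attribute [local instance] Matrix.linftyOpNormedAddCommGroup Matrix.linftyOpNormedRing
  Matrix.linftyOpNormedAlgebra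

lemma exp_formula (M : Matrix (Fin 2) (Fin 2) ℂ) (R : ℝ) (hR : R ≠ 0)
    (h : M * M = (-(R : ℂ) ^ 2) • 1) :
    NormedSpace.exp M =
      ((Real.cos R : ℝ) : ℂ) • (1 : Matrix (Fin 2) (Fin 2) ℂ)
        + ((Real.sin R / R : ℝ) : ℂ) • M := by
  have hM2 : ∀ k : ℕ, M ^ (2 * k) = ((-(R : ℂ) ^ 2) ^ k) • 1 := by
    intro k
    rw [pow_mul, pow_two, h, smul_pow, one_pow]
  rw [NormedSpace.exp_eq_tsum (𝕂 := ℂ)]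
  refine HasSum.tsum_eq ?_
  have hc := (Complex.hasSum_cos (R : ℂ)).smul_const (1 : Matrix (Fin 2) (Fin 2) ℂ)
  have hs := ((Complex.hasSum_sin (R : ℂ)).div_const (R : ℂ)).smul_const M
  have hRC : (R : ℂ) ≠ 0 := by exact_mod_cast hR
  refine HasSum.even_add_odd ?_ ?_
  · convert hc using 2 with k
    case e'_3 => rfl
    · rw [hM2 k, smul_smul]
      congr 1
      rw [neg_pow, ← pow_mul, div_eq_mul_inv]
      ring
    · rw [Complex.ofReal_cos]
  · convert hs using 2 with k
    case e'_3 => rfl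
    · rw [pow_succ, hM2 k, smul_mul_assoc, one_mul, smul_smul]
      congr 1
      have hfac : (((2 * k + 1).factorial : ℕ) : ℂ) ≠ 0 :=
        Nat.cast_ne_zero.mpr (Nat.factorial_ne_zero _)
      rw [neg_pow, ← pow_mul]
      field_simp
      ring
    · rw [Complex.ofReal_div, Complex.ofReal_sin]

noncomputable def mkT (a : ℝ) (z : ℂ) : Matrix (Fin 2) (Fin 2) ℂ :=
  !![(a : ℂ) * Complex.I, z; -(starRingEnd ℂ) z, -((a : ℂ) * Complex.I)]

noncomputable def mkA (α β : ℂ) : Matrix (Fin 2) (Fin 2) ℂ :=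
  !![α, β; -(starRingEnd ℂ) β, (starRingEnd ℂ) α]

lemma mkT_trace (a : ℝ) (z : ℂ) : (mkT a z).trace = 0 := by
  simp [mkT, Matrix.trace_fin_two]

lemma mkT_conjT (a : ℝ) (z : ℂ) : (mkT a z)ᴴ = -(mkT a z) := by
  ext i j
  fin_cases i <;> fin_cases j <;>
    simp [mkT, Matrix.conjTranspose_apply, Complex.ext_iff]

lemma mkT_mul (a : ℝ) (z : ℂ) :
    mkT a z * mkT a z = (-((a ^ 2 + Complex.normSq z : ℝ) : ℂ)) • 1 := by
  ext i j
  fin_cases i <;> fin_cases j <;>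
    simp [mkT, Matrix.mul_apply, Fin.sum_univ_two, Complex.ext_iff, Complex.normSq_apply,
      ← Complex.ofReal_pow] <;>
    exact ⟨by ring, by ring⟩

lemma eq_mkT (θ : Matrix (Fin 2) (Fin 2) ℂ) (h1 : θ.trace = 0) (h2 : θᴴ = -θ) :
    θ = mkT (θ 0 0).im (θ 0 1) := by
  have h00 : (starRingEnd ℂ) (θ 0 0) = -θ 0 0 := by
    have := congrFun (congrFun h2 0) 0
    simpa [Matrix.conjTranspose_apply] using this
  have h10 : (starRingEnd ℂ) (θ 1 0) = -θ 0 1 := by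
    have := congrFun (congrFun h2 0) 1
    simpa [Matrix.conjTranspose_apply] using this
  have htr : θ 1 1 = -θ 0 0 := by
    have := h1
    rw [Matrix.trace_fin_two] at this
    linear_combination this
  have hre : (θ 0 0).re = 0 := by
    have := congrArg Complex.re h00
    simp [Complex.ext_iff] at this ⊢
    linarith
  ext i j
  fin_cases i <;> fin_cases j
  · simp [mkT, Complex.ext_iff, hre]
  · simp [mkT]
  · have := congrArg (starRingEnd ℂ) h10
    simp at this
    simp [mkT, this]
  · simp [mkT, htr, Complex.ext_iff, hre]

lemma mkA_mem (α β : ℂ) (h : Complex.normSq α + Complex.normSq β = 1) :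
    mkA α β ∈ Matrix.specialUnitaryGroup (Fin 2) ℂ := by
  have h' : α * (starRingEnd ℂ) α + β * (starRingEnd ℂ) β = 1 := by
    rw [Complex.mul_conj, Complex.mul_conj]
    exact_mod_cast congrArg (fun r : ℝ => (r : ℂ)) h
  rw [Matrix.mem_specialUnitaryGroup_iff]
  constructor
  · rw [Matrix.mem_unitaryGroup_iff]
    ext i j
    fin_cases i <;> fin_cases j <;>
      simp [mkA, Matrix.mul_apply, Fin.sum_univ_two, Matrix.star_apply,
        Matrix.one_apply] <;>
      (first
        | exact h'
        | linear_combination h'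
        | ring)
  · rw [Matrix.det_fin_two]
    simp [mkA]
    linear_combination h'

lemma eq_mkA (A : Matrix (Fin 2) (Fin 2) ℂ) (hA : A ∈ Matrix.specialUnitaryGroup (Fin 2) ℂ) :
    A = mkA (A 0 0) (A 0 1) ∧ Complex.normSq (A 0 0) + Complex.normSq (A 0 1) = 1 := by
  obtain ⟨hu, hd⟩ := Matrix.mem_specialUnitaryGroup_iff.mp hA
  rw [Matrix.mem_unitaryGroup_iff'] at hu
  have hinv : A⁻¹ = star A := Matrix.inv_eq_left_inv hu
  have hadj : A⁻¹ = A.adjugate := by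
    rw [Matrix.inv_def, hd]
    simp
  have hstar : star A = A.adjugate := by rw [← hinv, hadj]
  have h11 : A 1 1 = (starRingEnd ℂ) (A 0 0) := by
    have := congrFun (congrFun hstar 0) 0
    simpa [Matrix.star_apply, Matrix.adjugate_fin_two] using this.symm
  have h10 : A 1 0 = -(starRingEnd ℂ) (A 0 1) := by
    have := congrFun (congrFun hstar 0) 1
    simp [Matrix.star_apply, Matrix.adjugate_fin_two] at this
    have := congrArg (starRingEnd ℂ) this
    simpa using this
  constructor
  · ext i j
    fin_cases i <;> fin_cases j <;> simp [mkA, h11, h10]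
  · rw [Matrix.det_fin_two, h11, h10] at hd
    have : ((Complex.normSq (A 0 0) + Complex.normSq (A 0 1) : ℝ) : ℂ) = 1 := by
      push_cast
      rw [← Complex.mul_conj, ← Complex.mul_conj]
      linear_combination hd
    exact_mod_cast this

noncomputable def sinc (R : ℝ) : ℝ := if R = 0 then 1 else Real.sin R / R

lemma rho_nonneg (a : ℝ) (z : ℂ) : 0 ≤ a ^ 2 + Complex.normSq z := by
  have := Complex.normSq_nonneg z
  positivity

lemma sqrt_eq_zero_case (a : ℝ) (z : ℂ)
    (h : Real.sqrt (a ^ 2 + Complex.normSq z) = 0) : a = 0 ∧ z = 0 := by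
  have h0 : a ^ 2 + Complex.normSq z = 0 :=
    (Real.sqrt_eq_zero (rho_nonneg a z)).mp h
  have h1 := Complex.normSq_nonneg z
  have h2 : a ^ 2 = 0 := by nlinarith
  have h3 : Complex.normSq z = 0 := by nlinarith
  exact ⟨by nlinarith, Complex.normSq_eq_zero.mp h3⟩

lemma mkT_zero : mkT 0 0 = 0 := by
  ext i j
  fin_cases i <;> fin_cases j <;> simp [mkT]

lemma sq_sqrt_rho (a : ℝ) (z : ℂ) :
    ((Real.sqrt (a ^ 2 + Complex.normSq z) : ℝ) : ℂ) ^ 2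
      = ((a ^ 2 + Complex.normSq z : ℝ) : ℂ) := by
  rw [← Complex.ofReal_pow, Real.sq_sqrt (rho_nonneg a z)]

lemma exp_mkT (a : ℝ) (z : ℂ) :
    NormedSpace.exp (mkT a z) =
      mkA ((Real.cos (Real.sqrt (a ^ 2 + Complex.normSq z)) : ℂ)
            + (a : ℂ) * (sinc (Real.sqrt (a ^ 2 + Complex.normSq z)) : ℂ) * Complex.I)
          ((sinc (Real.sqrt (a ^ 2 + Complex.normSq z)) : ℂ) * z) := by
  set R := Real.sqrt (a ^ 2 + Complex.normSq z) with hRdef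
  by_cases hR : R = 0
  · obtain ⟨ha, hz⟩ := sqrt_eq_zero_case a z hR
    subst ha hz
    rw [mkT_zero, NormedSpace.exp_zero, hR]
    ext i j
    fin_cases i <;> fin_cases j <;> simp [mkA, sinc, Matrix.one_apply]
  · have h : mkT a z * mkT a z = (-(R : ℂ) ^ 2) • 1 := by
      rw [mkT_mul, hRdef, sq_sqrt_rho]
    rw [exp_formula (mkT a z) R hR h]
    have hs : sinc R = Real.sin R / R := if_neg hR
    ext i j
    fin_cases i <;> fin_cases j <;>
      simp [mkA, mkT, hs, Matrix.one_apply, Complex.ext_iff] <;> ring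

lemma su2Norm' (a : ℝ) (z : ℂ) :
    Real.sqrt (-((mkT a z * mkT a z).trace.re)) =
      Real.sqrt 2 * Real.sqrt (a ^ 2 + Complex.normSq z) := by
  rw [mkT_mul]
  rw [Matrix.trace_smul, Matrix.trace_one]
  simp only [Fintype.card_fin]
  rw [← Real.sqrt_mul (by norm_num : (0:ℝ) ≤ 2)]
  congr 1
  push_cast
  simp [Complex.ofReal_re, ← Complex.ofReal_pow]
  ring

lemma sinc_pos_of (R : ℝ) (h0 : 0 < R) (hπ : R < Real.pi) : 0 < sinc R := by
  rw [sinc, if_neg (ne_of_gt h0)]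
  exact div_pos (Real.sin_pos_of_pos_of_lt_pi h0 hπ) h0

lemma su2Norm_mkT_lt_iff (a : ℝ) (z : ℂ) :
    su2Norm (mkT a z) < Real.pi * Real.sqrt 2 ↔
      Real.sqrt (a ^ 2 + Complex.normSq z) < Real.pi := by
  unfold su2Norm
  rw [su2Norm', mul_comm Real.pi]
  exact mul_lt_mul_iff_right₀ (by positivity)

lemma normSq_cond (a : ℝ) (z : ℂ) :
    Complex.normSq ((Real.cos (Real.sqrt (a ^ 2 + Complex.normSq z)) : ℂ)
        + (a : ℂ) * (sinc (Real.sqrt (a ^ 2 + Complex.normSq z)) : ℂ) * Complex.I)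
      + Complex.normSq ((sinc (Real.sqrt (a ^ 2 + Complex.normSq z)) : ℂ) * z) = 1 := by
  set R := Real.sqrt (a ^ 2 + Complex.normSq z) with hRdef
  have key : (sinc R) ^ 2 * (a ^ 2 + Complex.normSq z) = Real.sin R ^ 2 := by
    by_cases hR : R = 0
    · obtain ⟨ha, hz⟩ := sqrt_eq_zero_case a z hR
      simp [ha, hz, hR]
    · have hRsq : R ^ 2 = a ^ 2 + Complex.normSq z := Real.sq_sqrt (rho_nonneg a z)
      rw [sinc, if_neg hR, ← hRsq]
      field_simp
  have h1 : Complex.normSq ((Real.cos R : ℂ) + (a : ℂ) * (sinc R : ℂ) * Complex.I)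
      = Real.cos R ^ 2 + (a * sinc R) ^ 2 := by
    simp [Complex.normSq_apply, Complex.cos_ofReal_re]
    ring
  have h2 : Complex.normSq ((sinc R : ℂ) * z) = sinc R ^ 2 * Complex.normSq z := by
    rw [Complex.normSq_mul, Complex.normSq_ofReal]
    ring
  rw [h1, h2]
  have := Real.sin_sq_add_cos_sq R
  nlinarith [key]

lemma mkA_ne_neg_one (α β : ℂ) (h : α.re ≠ -1) : mkA α β ≠ -1 := by
  intro hc
  have := congrFun (congrFun hc 0) 0
  simp [mkA, Matrix.one_apply] at this
  rw [this] at h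
  simp at h

/-- The matrix exponential restricts to a bijection from the open ball
`{θ ∈ su(2) : |θ| < π√2}` onto `SU(2) \ {-I}`. -/
theorem stmt_0 :
    Set.BijOn (NormedSpace.exp)
      {θ : Matrix (Fin 2) (Fin 2) ℂ | θ.trace = 0 ∧ θᴴ = -θ ∧
        su2Norm θ < Real.pi * Real.sqrt 2}
      {A : Matrix (Fin 2) (Fin 2) ℂ | A ∈ Matrix.specialUnitaryGroup (Fin 2) ℂ ∧ A ≠ -1} := by
  refine ⟨?_, ?_, ?_⟩
  · -- MapsTo
    rintro θ ⟨h1, h2, h3⟩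
    have hθ := eq_mkT θ h1 h2
    set a := (θ 0 0).im
    set z := θ 0 1
    set R := Real.sqrt (a ^ 2 + Complex.normSq z) with hRdef
    rw [hθ] at h3
    have hRπ : R < Real.pi := (su2Norm_mkT_lt_iff a z).mp h3
    rw [Set.mem_setOf_eq, hθ, exp_mkT]
    refine ⟨mkA_mem _ _ (normSq_cond a z), mkA_ne_neg_one _ _ ?_⟩
    have hre : ((Real.cos R : ℂ) + (a : ℂ) * (sinc R : ℂ) * Complex.I).re = Real.cos R := by
      simp [Complex.cos_ofReal_re]
    rw [hre]
    intro hcontra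
    have hRmem : R ∈ Set.Icc 0 Real.pi := ⟨Real.sqrt_nonneg _, le_of_lt hRπ⟩
    have : R = Real.pi := by
      refine Real.injOn_cos hRmem ⟨le_of_lt Real.pi_pos, le_refl _⟩ ?_
      rw [hcontra, Real.cos_pi]
    exact absurd this (ne_of_lt hRπ)
  · -- InjOn
    rintro θ₁ ⟨h11, h12, h13⟩ θ₂ ⟨h21, h22, h23⟩ heq
    have hθ₁ := eq_mkT θ₁ h11 h12
    have hθ₂ := eq_mkT θ₂ h21 h22
    set a₁ := (θ₁ 0 0).im; set z₁ := θ₁ 0 1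
    set a₂ := (θ₂ 0 0).im; set z₂ := θ₂ 0 1
    set R₁ := Real.sqrt (a₁ ^ 2 + Complex.normSq z₁) with hR₁def
    set R₂ := Real.sqrt (a₂ ^ 2 + Complex.normSq z₂) with hR₂def
    rw [hθ₁] at h13; rw [hθ₂] at h23
    have hR₁π : R₁ < Real.pi := (su2Norm_mkT_lt_iff a₁ z₁).mp h13
    have hR₂π : R₂ < Real.pi := (su2Norm_mkT_lt_iff a₂ z₂).mp h23
    rw [hθ₁, hθ₂, exp_mkT, exp_mkT] at heq
    have e00 := congrFun (congrFun heq 0) 0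
    have e01 := congrFun (congrFun heq 0) 1
    simp only [mkA, Matrix.of_apply, Matrix.cons_val', Matrix.cons_val_zero,
      Matrix.cons_val_one, Matrix.head_cons, Matrix.empty_val',
      Matrix.cons_val_fin_one, Matrix.head_fin_const] at e00 e01
    have ecos : Real.cos R₁ = Real.cos R₂ := by
      have := congrArg Complex.re e00
      simpa [Complex.cos_ofReal_re] using this
    have hRR : R₁ = R₂ :=
      Real.injOn_cos ⟨Real.sqrt_nonneg _, le_of_lt hR₁π⟩
        ⟨Real.sqrt_nonneg _, le_of_lt hR₂π⟩ ecos
    by_cases hR0 : R₁ = 0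
    · obtain ⟨ha₁, hz₁⟩ := sqrt_eq_zero_case a₁ z₁ hR0
      have hR20 : Real.sqrt (a₂ ^ 2 + Complex.normSq z₂) = 0 := by
        rw [← hR₂def, ← hRR]; exact hR0
      obtain ⟨ha₂, hz₂⟩ := sqrt_eq_zero_case a₂ z₂ hR20
      rw [hθ₁, hθ₂, ha₁, hz₁, ha₂, hz₂]
    · have hR₁pos : 0 < R₁ := lt_of_le_of_ne (Real.sqrt_nonneg _) (Ne.symm hR0)
      have hspos : 0 < sinc R₁ := sinc_pos_of R₁ hR₁pos hR₁π
      have hsC : ((sinc R₁ : ℝ) : ℂ) ≠ 0 := Complex.ofReal_ne_zero.mpr (ne_of_gt hspos)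
      rw [← hR₁def, ← hR₂def, ← hRR] at e00 e01
      have hzz : z₁ = z₂ := mul_left_cancel₀ hsC e01
      have haa : a₁ = a₂ := by
        have := congrArg Complex.im e00
        simp at this
        rcases this with h | h
        · exact h
        · exact absurd h (ne_of_gt hspos)
      rw [hθ₁, hθ₂, haa, hzz]
  · -- SurjOn
    rintro A ⟨hA, hA1⟩
    obtain ⟨hAeq, hnsq⟩ := eq_mkA A hA
    set α := A 0 0 with hα
    set β := A 0 1 with hβ
    have hnsqα : Complex.normSq α = α.re ^ 2 + α.im ^ 2 := by
      rw [Complex.normSq_apply]; ring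
    have hβnn := Complex.normSq_nonneg β
    have hαnn := Complex.normSq_nonneg α
    have hre_mem : -1 ≤ α.re ∧ α.re ≤ 1 := by
      constructor <;> nlinarith [sq_nonneg (α.re + 1), sq_nonneg (α.re - 1), sq_nonneg α.im]
    have hne : α.re ≠ -1 := by
      intro h
      have him : α.im = 0 := by nlinarith [sq_nonneg α.im]
      have hB : β = 0 := by
        have : Complex.normSq β = 0 := by nlinarith
        exact Complex.normSq_eq_zero.mp this
      have hαv : α = -1 := by
        apply Complex.ext <;> simp [h, him]
      apply hA1
      rw [hAeq, hαv, hB]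
      ext i j
      fin_cases i <;> fin_cases j <;> simp [mkA, Matrix.one_apply]
    set R := Real.arccos α.re with hRdef
    have hcosR : Real.cos R = α.re := Real.cos_arccos hre_mem.1 hre_mem.2
    have hRmem : 0 ≤ R ∧ R ≤ Real.pi := ⟨Real.arccos_nonneg _, Real.arccos_le_pi _⟩
    have hRπ : R < Real.pi := by
      rcases lt_or_eq_of_le hRmem.2 with h | h
      · exact h
      · exfalso; apply hne; rw [← hcosR, h, Real.cos_pi]
    by_cases hR0 : R = 0
    · have hre1 : α.re = 1 := by rw [← hcosR, hR0, Real.cos_zero]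
      have him : α.im = 0 := by nlinarith [sq_nonneg α.im]
      have hB : β = 0 := by
        have : Complex.normSq β = 0 := by nlinarith
        exact Complex.normSq_eq_zero.mp this
      have hαv : α = 1 := by apply Complex.ext <;> simp [hre1, him]
      refine ⟨0, ⟨?_, ?_, ?_⟩, ?_⟩
      · simp
      · simp
      · have : su2Norm 0 = 0 := by simp [su2Norm]
        rw [this]
        positivity
      · rw [NormedSpace.exp_zero, hAeq, hαv, hB]
        ext i j
        fin_cases i <;> fin_cases j <;> simp [mkA, Matrix.one_apply]
    · have hRpos : 0 < R := lt_of_le_of_ne hRmem.1 (Ne.symm hR0)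
      have hsin : 0 < Real.sin R := Real.sin_pos_of_pos_of_lt_pi hRpos hRπ
      set s := Real.sin R / R with hsdef
      have hspos : 0 < s := div_pos hsin hRpos
      set a := α.im / s with hadef
      set zz := β / ((s : ℝ) : ℂ) with hzzdef
      have hnsqzz : Complex.normSq zz = Complex.normSq β / s ^ 2 := by
        rw [hzzdef, Complex.normSq_div, Complex.normSq_ofReal]
        ring_nf
      have key : a ^ 2 + Complex.normSq zz = R ^ 2 := by
        rw [hadef, hnsqzz]
        have h1 : α.im ^ 2 + Complex.normSq β = 1 - α.re ^ 2 := by nlinarith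
        have h2 : 1 - α.re ^ 2 = Real.sin R ^ 2 := by
          rw [← hcosR]
          nlinarith [Real.sin_sq_add_cos_sq R]
        rw [div_pow, div_pow, ← add_div, h1, h2]
        rw [div_div_eq_mul_div, mul_comm, mul_div_assoc,
          div_self (ne_of_gt (pow_pos hsin 2)), mul_one]
      have hsqrt : Real.sqrt (a ^ 2 + Complex.normSq zz) = R := by
        rw [key]
        exact Real.sqrt_sq (le_of_lt hRpos)
      refine ⟨mkT a zz, ⟨mkT_trace _ _, mkT_conjT _ _, ?_⟩, ?_⟩
      · rw [su2Norm_mkT_lt_iff, hsqrt]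
        exact hRπ
      · rw [exp_mkT, hsqrt]
        have hsinc : sinc R = s := by rw [sinc, if_neg hR0, hsdef]
        have hαc : ((Real.cos R : ℝ) : ℂ) + (a : ℂ) * (s : ℂ) * Complex.I = α := by
          apply Complex.ext
          · simpa [Complex.cos_ofReal_re] using hcosR
          · show ((Real.cos R : ℝ) : ℂ).im + ((a : ℂ) * (s : ℂ) * Complex.I).im = α.im
            simp only [Complex.ofReal_im, Complex.mul_im, Complex.mul_re, Complex.ofReal_re,
              Complex.I_re, Complex.I_im, Complex.ofReal_im, zero_add, mul_zero, mul_one,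
              sub_zero, zero_mul, add_zero]
            rw [hadef]
            field_simp
        have hβc : ((s : ℝ) : ℂ) * zz = β := by
          rw [hzzdef, mul_div_cancel₀ _ (Complex.ofReal_ne_zero.mpr (ne_of_gt hspos))]
        rw [hsinc, hαc, hβc, hAeq]
end

section
/- For θ ∈ su(2), one has exp(θ) = -I if and only if |θ| = √2·π·(2k+1) for some nonnegative integer k. -/
open Matrix


lemma exp_closed_form (θ : Matrix (Fin 2) (Fin 2) ℂ) (α : ℝ) (hα : α ≠ 0)
    (h : θ * θ = ((-(α^2) : ℝ) : ℂ) • 1) :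
    NormedSpace.exp θ = ((Real.cos α : ℝ) : ℂ) • 1 + ((Real.sin α / α : ℝ) : ℂ) • θ := by
  letI : SeminormedRing (Matrix (Fin 2) (Fin 2) ℂ) := Matrix.linftyOpSemiNormedRing
  letI : NormedRing (Matrix (Fin 2) (Fin 2) ℂ) := Matrix.linftyOpNormedRing
  letI : NormedAlgebra ℂ (Matrix (Fin 2) (Fin 2) ℂ) := Matrix.linftyOpNormedAlgebra
  have hαC : (α : ℂ) ≠ 0 := by exact_mod_cast hα
  have hpow_even : ∀ n : ℕ, θ ^ (2 * n) = ((-1 : ℂ) ^ n * (α : ℂ) ^ (2 * n)) • 1 := by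
    intro n
    rw [pow_mul, sq, h, smul_pow, one_pow]
    congr 1
    push_cast
    rw [pow_mul]
    ring
  have hpow_odd : ∀ n : ℕ, θ ^ (2 * n + 1) = ((-1 : ℂ) ^ n * (α : ℂ) ^ (2 * n)) • θ := by
    intro n
    rw [pow_succ, hpow_even n, smul_mul_assoc, one_mul]
  rw [NormedSpace.exp_eq_tsum (𝕂 := ℂ)]
  refine (HasSum.even_add_odd ?_ ?_).tsum_eq
  · have hc := (Complex.hasSum_cos (α : ℂ)).smul_const (1 : Matrix (Fin 2) (Fin 2) ℂ)
    rw [← Complex.ofReal_cos] at hc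
    convert hc using 2 with n
    · rfl
    rw [hpow_even n, smul_smul]
    congr 1
    field_simp
  · have hs := ((Complex.hasSum_sin (α : ℂ)).div_const (α : ℂ)).smul_const θ
    have : (Complex.sin (α : ℂ)) / (α : ℂ) = ((Real.sin α / α : ℝ) : ℂ) := by
      push_cast [Complex.ofReal_sin]; ring
    rw [this] at hs
    convert hs using 2 with n
    · rfl
    rw [hpow_odd n, smul_smul]
    congr 1
    have hk : (((2*n+1).factorial : ℕ) : ℂ) ≠ 0 := by
      exact_mod_cast (2*n+1).factorial_ne_zero
    rw [div_div, eq_div_iff (mul_ne_zero hk hαC), pow_succ]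
    field_simp

/-- For `θ ∈ su(2)` (trace-free skew-Hermitian, with norm `|θ| = √(-Tr θ²)`),
`exp(θ) = -I` iff `|θ| = √2·π·(2k+1)` for some nonnegative integer `k`. -/
theorem stmt_1 (θ : Matrix (Fin 2) (Fin 2) ℂ)
    (htr : θ.trace = 0) (hskew : θᴴ = -θ) :
    NormedSpace.exp θ = -1 ↔
      ∃ k : ℕ, Real.sqrt (-(θ * θ).trace.re) = Real.sqrt 2 * Real.pi * (2 * k + 1) := by
  have h11 : θ 1 1 = -θ 0 0 := by
    have := Matrix.trace_fin_two θ
    rw [htr] at this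
    linear_combination -this
  have h00 : (θ 0 0).re = 0 := by
    have h := congrFun (congrFun hskew 0) 0
    simp [Matrix.conjTranspose_apply] at h
    have := congrArg Complex.re h
    simp at this
    linarith
  have h10 : θ 1 0 = -(starRingEnd ℂ) (θ 0 1) := by
    have h := congrFun (congrFun hskew 1) 0
    simp [Matrix.conjTranspose_apply] at h
    linear_combination h
  set β : ℝ := (θ 0 0).im ^ 2 + Complex.normSq (θ 0 1) with hβdef
  have hβ : 0 ≤ β := add_nonneg (sq_nonneg _) (Complex.normSq_nonneg _)
  set α : ℝ := Real.sqrt β with hαdef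
  have hα2 : α ^ 2 = β := Real.sq_sqrt hβ
  have key : θ 0 0 * θ 0 0 + θ 0 1 * θ 1 0 = -(β : ℂ) := by
    rw [h10, mul_neg, Complex.mul_conj]
    apply Complex.ext <;>
      simp [Complex.mul_re, Complex.mul_im, Complex.normSq_apply, h00, hβdef,
        ← Complex.ofReal_pow] <;> ring
  have hsq : θ * θ = ((-(α ^ 2) : ℝ) : ℂ) • 1 := by
    rw [hα2]
    ext i j
    fin_cases i <;> fin_cases j <;>
      simp [Matrix.mul_apply, Fin.sum_univ_two, Matrix.one_apply]
    · exact key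
    · rw [h11]; ring
    · rw [h11]; ring
    · rw [h11]; linear_combination key
  have htrsq : -(θ * θ).trace.re = 2 * α ^ 2 := by
    rw [hsq]
    simp [Matrix.trace_smul, Matrix.trace_one, ← Complex.ofReal_pow]
    ring
  have hnorm : Real.sqrt (-(θ * θ).trace.re) = Real.sqrt 2 * α := by
    rw [htrsq, Real.sqrt_mul (by norm_num : (0:ℝ) ≤ 2), Real.sqrt_sq (Real.sqrt_nonneg _)]
  rcases eq_or_lt_of_le hβ with hβ0 | hβpos
  · -- β = 0, so θ = 0
    have him : (θ 0 0).im = 0 := by nlinarith [Complex.normSq_nonneg (θ 0 1), sq_nonneg (θ 0 0).im]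
    have h01 : θ 0 1 = 0 := by
      have : Complex.normSq (θ 0 1) = 0 := by nlinarith [sq_nonneg (θ 0 0).im]
      exact Complex.normSq_eq_zero.mp this
    have hθ0 : θ = 0 := by
      ext i j
      fin_cases i <;> fin_cases j <;>
        simp [h01, h10, h11]
      · exact Complex.ext h00 him
      · exact Complex.ext h00 him
    have hα0 : α = 0 := by rw [hαdef, ← hβ0, Real.sqrt_zero]
    constructor
    · intro hexp
      exfalso
      rw [hθ0, NormedSpace.exp_zero] at hexp
      have h2 := congrArg Matrix.trace hexp
      rw [Matrix.trace_one, Matrix.trace_neg, Matrix.trace_one] at h2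
      norm_num [Fintype.card_fin] at h2
    · rintro ⟨k, hk⟩
      exfalso
      rw [hnorm, hα0, mul_zero] at hk
      have hpos : 0 < Real.sqrt 2 * Real.pi * (2 * (k:ℝ) + 1) := by positivity
      linarith [hk ▸ hpos]
  · -- β > 0
    have hαpos : 0 < α := Real.sqrt_pos.mpr hβpos
    have hαne : α ≠ 0 := ne_of_gt hαpos
    have hclosed := exp_closed_form θ α hαne hsq
    constructor
    · intro hexp
      rw [hclosed] at hexp
      have htr2 := congrArg Matrix.trace hexp
      simp [Matrix.trace_add, Matrix.trace_smul, Matrix.trace_one, htr] at htr2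
      have hcos : Real.cos α = -1 := by
        have : ((Real.cos α : ℝ) : ℂ) = -1 := by
          rw [Complex.ofReal_cos]; linear_combination htr2 / 2
        exact_mod_cast this
      obtain ⟨n, hn⟩ := Real.cos_eq_neg_one_iff.mp hcos
      have hn0 : 0 ≤ n := by
        by_contra hneg
        push_neg at hneg
        have hn1' : n ≤ -1 := by omega
        have hn1 : (n : ℝ) ≤ -1 := by exact_mod_cast hn1'
        nlinarith [Real.pi_pos, hαpos]
      refine ⟨n.toNat, ?_⟩
      rw [hnorm, ← hn]
      have : ((n.toNat : ℕ) : ℝ) = (n : ℝ) := by exact_mod_cast Int.toNat_of_nonneg hn0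
      rw [this]
      ring
    · rintro ⟨k, hk⟩
      rw [hnorm] at hk
      have hs2 : Real.sqrt 2 ≠ 0 := by positivity
      have hαval : α = Real.pi * (2 * (k:ℝ) + 1) := by
        apply mul_left_cancel₀ hs2
        rw [hk]; ring
      have hcos : Real.cos α = -1 := by
        rw [hαval]
        apply Real.cos_eq_neg_one_iff.mpr
        exact ⟨(k : ℤ), by push_cast; ring⟩
      have hsin : Real.sin α = 0 := by
        have hrw : α = ((2 * (k:ℤ) + 1 : ℤ) : ℝ) * Real.pi := by
          push_cast; rw [hαval]; ring
        rw [hrw]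
        exact Real.sin_int_mul_pi _
      rw [hclosed, hcos, hsin]
      simp
end
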